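/- Let G be a finite group and P a p-subgroup. Then C_G(P) has characteristic p if and only if N_G(P) has characteristic p. -/

import Mathlib

/-- The largest normal `p`-subgroup `O_p(G)`: the join of all normal `p`-subgroups. -/
def pCore (p : ℕ) (G : Type*) [Group G] : Subgroup G :=
  ⨆ (N : Subgroup G) (_ : N.Normal) (_ : IsPGroup p N), N

/-- A group `G` has characteristic `p` if `C_G(O_p(G)) ≤ O_p(G)`. -/
def HasCharP (p : ℕ) (G : Type*) [Group G] : Prop :=
  Subgroup.centralizer (pCore p G : Set G) ≤ pCore p G

/-- An element is `p`-central if it has order `p` and lies in the center of some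
Sylow `p`-subgroup of `G`. -/
def IsPCentral (p : ℕ) {G : Type*} [Group G] (x : G) : Prop :=
  orderOf x = p ∧ ∃ S : Sylow p G,
    x ∈ (S : Subgroup G) ⊓ Subgroup.centralizer ((S : Subgroup G) : Set G)

/-- A `p`-subgroup `P` is `p`-centric if `Z(P) = P ⊓ C_G(P)` is a Sylow `p`-subgroup of
`C_G(P)`, expressed via maximality among `p`-subgroups of `C_G(P)`. -/
def IsPCentric (p : ℕ) {G : Type*} [Group G] (P : Subgroup G) : Prop :=
  ∀ Q : Subgroup G, Q ≤ Subgroup.centralizer (P : Set G) → IsPGroup p Q →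
    P ⊓ Subgroup.centralizer (P : Set G) ≤ Q →
    Q = P ⊓ Subgroup.centralizer (P : Set G)

/-- The step `P ↦ O_p(N_G(P))`, viewed as a subgroup of `G`. -/
def pRadicalStep (p : ℕ) {G : Type*} [Group G] (P : Subgroup G) : Subgroup G :=
  (pCore p ↥(Subgroup.normalizer (P : Set G))).map (Subgroup.normalizer (P : Set G)).subtype

/-- The chain `P₀ = Q`, `P_{i+1} = O_p(N_G(P_i))`. -/
def radChain (p : ℕ) {G : Type*} [Group G] (Q : Subgroup G) : ℕ → Subgroup G
  | 0 => Q
  | n + 1 => pRadicalStep p (radChain p Q n)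

/-- `G` has local characteristic `p`: every `p`-local subgroup has characteristic `p`. -/
def LocalCharP (p : ℕ) (G : Type*) [Group G] : Prop :=
  ∀ P : Subgroup G, P ≠ ⊥ → IsPGroup p P → HasCharP p ↥(Subgroup.normalizer (P : Set G))

/-- `G` has parabolic characteristic `p`: every `p`-local subgroup containing a Sylow
`p`-subgroup of `G` has characteristic `p`. -/
def ParabolicCharP (p : ℕ) (G : Type*) [Group G] : Prop :=
  ∀ P : Subgroup G, P ≠ ⊥ → IsPGroup p P →
    (∃ S : Sylow p G, (S : Subgroup G) ≤ Subgroup.normalizer (P : Set G)) → HasCharP p ↥(Subgroup.normalizer (P : Set G))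



section PCoreLemmas

variable (p : ℕ) {G : Type*} [Group G]

theorem le_pCore {N : Subgroup G} (hN : N.Normal) (hp : IsPGroup p N) :
    N ≤ pCore p G :=
  le_iSup_of_le N (le_iSup_of_le hN (le_iSup_of_le hp le_rfl))

theorem pCore_le {K : Subgroup G} (h : ∀ N : Subgroup G, N.Normal → IsPGroup p N → N ≤ K) :
    pCore p G ≤ K :=
  iSup_le fun N => iSup_le fun hN => iSup_le fun hp => h N hN hp

theorem pCore_normal : (pCore p G).Normal := by
  constructor
  intro n hn g
  have : pCore p G ≤ (pCore p G).comap (MulAut.conj g).toMonoidHom := by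
    refine pCore_le p fun N hN hp => ?_
    intro x hx
    simp only [Subgroup.mem_comap]
    exact le_pCore p hN hp (hN.conj_mem x hx g)
  have := this hn
  simpa only [Subgroup.mem_comap, MulEquiv.coe_toMonoidHom, MulAut.conj_apply] using this

theorem pCore_isPGroup [Finite G] [Fact p.Prime] : IsPGroup p (pCore p G) := by
  obtain ⟨S⟩ : Nonempty (Sylow p G) := inferInstance
  have h : pCore p G ≤ S := by
    refine pCore_le p fun N hN hp => ?_
    obtain ⟨T, hT⟩ := hp.exists_le_sylow
    obtain ⟨g, rfl⟩ := MulAction.exists_smul_eq G T S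
    intro x hx
    have : g⁻¹ * x * g ∈ N := by
      have := hN.conj_mem x hx g⁻¹
      simpa using this
    have hmem : g⁻¹ * x * g ∈ (T : Subgroup G) := hT this
    show x ∈ ((g • T : Sylow p G) : Subgroup G)
    rw [Sylow.coe_subgroup_smul]
    rw [Subgroup.mem_pointwise_smul_iff_inv_smul_mem]
    simpa [MulAut.smul_def, mul_assoc] using hmem
  exact S.2.to_le h

end PCoreLemmas

section OpS

variable (p : ℕ) {G : Type*} [Group G]

/-- `O_p(K)` viewed as a subgroup of the ambient group. -/
def Op' (K : Subgroup G) : Subgroup G := (pCore p ↥K).map K.subtype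

theorem Op'_le (K : Subgroup G) : Op' p K ≤ K := by
  rintro x ⟨y, _, rfl⟩; exact y.2

theorem Op'_isPGroup [Finite G] [Fact p.Prime] (K : Subgroup G) : IsPGroup p (Op' p K) :=
  (pCore_isPGroup p).map _

/-- Any `p`-subgroup of `K` normalized by all of `K` lies in `O_p(K)`. -/
theorem le_Op' {K Q : Subgroup G} (hQK : Q ≤ K) (hp : IsPGroup p Q)
    (hnorm : ∀ k ∈ K, ∀ q ∈ Q, k * q * k⁻¹ ∈ Q) : Q ≤ Op' p K := by
  have h1 : (Q.subgroupOf K).Normal := by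
    constructor
    rintro ⟨q, hqK⟩ hq ⟨k, hkK⟩
    exact hnorm k hkK q hq
  have h2 : IsPGroup p (Q.subgroupOf K) := hp.comap_subtype
  have h3 : Q.subgroupOf K ≤ pCore p ↥K := le_pCore p h1 h2
  have h4 : (Q.subgroupOf K).map K.subtype ≤ Op' p K := Subgroup.map_mono h3
  rwa [Subgroup.subgroupOf_map_subtype, inf_eq_left.mpr hQK] at h4

theorem Op'_normal_in [Finite G] [Fact p.Prime] {K : Subgroup G} {h : G}
    (hh : h ∈ Subgroup.normalizer (K : Set G)) : ∀ q ∈ Op' p K, h * q * h⁻¹ ∈ Op' p K := by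
  intro q hq
  set Q' : Subgroup G := (Op' p K).map (MulAut.conj h).toMonoidHom with hQ'
  have hmem : h * q * h⁻¹ ∈ Q' := ⟨q, hq, by simp [MulAut.conj_apply]⟩
  refine le_Op' p ?_ ?_ ?_ hmem
  · rintro x ⟨y, hy, rfl⟩
    simp only [MulEquiv.coe_toMonoidHom, MulAut.conj_apply]
    exact (Subgroup.mem_normalizer_iff.mp hh y).mp (Op'_le p K hy)
  · exact (Op'_isPGroup p K).map _
  · rintro k hkK x ⟨y, hy, rfl⟩
    simp only [MulEquiv.coe_toMonoidHom, MulAut.conj_apply]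
    have hk' : h⁻¹ * k * h ∈ K := by
      have := (Subgroup.mem_normalizer_iff.mp (inv_mem hh) k).mp hkK
      simpa using this
    refine ⟨(h⁻¹ * k * h) * y * (h⁻¹ * k * h)⁻¹, ?_, ?_⟩
    · -- Op' p K is normal in K
      have : ∀ a ∈ K, ∀ b ∈ Op' p K, a * b * a⁻¹ ∈ Op' p K := by
        intro a haK b hb
        obtain ⟨⟨b', hb'⟩, hbcore, rfl⟩ := hb
        have : (⟨a, haK⟩ * ⟨b', hb'⟩ * ⟨a, haK⟩⁻¹ : ↥K) ∈ pCore p ↥K :=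
          (pCore_normal p).conj_mem _ hbcore _
        exact ⟨_, this, rfl⟩
      exact this _ hk' y hy
    · simp only [MulEquiv.coe_toMonoidHom, MulAut.conj_apply]
      group

theorem Op'_normal [Finite G] [Fact p.Prime] {K : Subgroup G} :
    ∀ k ∈ K, ∀ q ∈ Op' p K, k * q * k⁻¹ ∈ Op' p K := fun k hk =>
  Op'_normal_in p (Subgroup.le_normalizer hk)

/-- Bridge: `HasCharP` for a subgroup, phrased in the ambient group. -/
theorem hasCharP_iff (K : Subgroup G) :
    (Subgroup.centralizer (pCore p ↥K : Set ↥K) ≤ pCore p ↥K) ↔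
      K ⊓ Subgroup.centralizer (Op' p K : Set G) ≤ Op' p K := by
  constructor
  · rintro h x ⟨hxK, hxC⟩
    have : (⟨x, hxK⟩ : ↥K) ∈ Subgroup.centralizer (pCore p ↥K : Set ↥K) := by
      rw [Subgroup.mem_centralizer_iff]
      intro y hy
      have : (y : G) * x = x * (y : G) :=
        Subgroup.mem_centralizer_iff.mp hxC _ ⟨y, hy, rfl⟩
      exact Subtype.ext this
    exact ⟨⟨x, hxK⟩, h this, rfl⟩
  · intro h z hz
    have hzval : (z : G) ∈ K ⊓ Subgroup.centralizer (Op' p K : Set G) := by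
      rw [Subgroup.mem_inf]
      refine ⟨z.2, ?_⟩
      rw [Subgroup.mem_centralizer_iff]
      rintro _ ⟨y, hy, rfl⟩
      exact congrArg Subtype.val (Subgroup.mem_centralizer_iff.mp hz y hy)
    obtain ⟨w, hw, hwz⟩ := h hzval
    rwa [show w = z from Subtype.ext hwz] at hw

end OpS

section NormalInherits

variable (p : ℕ) {G : Type*} [Group G] [Finite G] [Fact p.Prime]

/-- p'-order element of a p-group is trivial. -/
theorem eq_one_of_coprime_order {H : Subgroup G} (hH : IsPGroup p H) {c : G} (hc : c ∈ H)
    {m : ℕ} (hcm : c ^ m = 1) (hcop : Nat.Coprime p m) : c = 1 := by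
  obtain ⟨i, hi⟩ := hH ⟨c, hc⟩
  have hc1 : c ^ p ^ i = 1 := by
    have := congrArg Subtype.val hi
    simpa using this
  have h1 : orderOf c ∣ p ^ i := orderOf_dvd_of_pow_eq_one hc1
  have h2 : orderOf c ∣ m := orderOf_dvd_of_pow_eq_one hcm
  have h3 : orderOf c ∣ Nat.gcd (p ^ i) m := Nat.dvd_gcd h1 h2
  rw [Nat.Coprime.gcd_eq_one (hcop.pow_left i), Nat.dvd_one] at h3
  exact orderOf_eq_one_iff.mp h3

theorem hasCharP_of_normal
    (h : Subgroup.centralizer (pCore p G : Set G) ≤ pCore p G)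
    {K : Subgroup G} (hK : K.Normal) :
    Subgroup.centralizer (pCore p ↥K : Set ↥K) ≤ pCore p ↥K := by
  rw [hasCharP_iff]
  set D := Op' p K with hD
  have hDK : D ≤ K := Op'_le p K
  have hDnorm : ∀ g : G, ∀ d ∈ D, g * d * g⁻¹ ∈ D := fun g =>
    Op'_normal_in p (by simp [Subgroup.normalizer_eq_top_iff.mpr hK])
  have hKO : K ⊓ pCore p G ≤ D := by
    refine le_Op' p inf_le_left ((pCore_isPGroup p).to_inf_right) ?_
    rintro k hkK q ⟨hqK, hqO⟩
    exact ⟨hK.conj_mem q hqK k, (pCore_normal p).conj_mem q hqO k⟩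
  set X := K ⊓ Subgroup.centralizer (D : Set G) with hX
  have hXnorm : ∀ k ∈ K, ∀ x ∈ X, k * x * k⁻¹ ∈ X := by
    rintro k hkK x ⟨hxK, hxC⟩
    refine ⟨hK.conj_mem x hxK k, Subgroup.mem_centralizer_iff.mpr fun d hd => ?_⟩
    have hd' : k⁻¹ * d * k ∈ D := by
      have := hDnorm k⁻¹ d hd; simpa using this
    have := Subgroup.mem_centralizer_iff.mp hxC _ hd'
    -- (k⁻¹ d k) x = x (k⁻¹ d k)  ⟹  d (k x k⁻¹) = (k x k⁻¹) d
    have h2 := congrArg (fun z => k * z * k⁻¹) this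
    simpa [mul_assoc] using h2
  have hXp : IsPGroup p X := by
    intro x
    set n := orderOf (x : G) with hn
    have hn0 : n ≠ 0 := (orderOf_pos _).ne'
    set k := n.factorization p with hk
    set m := ordCompl[p] n with hm
    have hcop : Nat.Coprime p m := Nat.coprime_ordCompl Fact.out hn0
    refine ⟨k, ?_⟩
    set y := (x : G) ^ p ^ k with hy
    have hyX : y ∈ X := pow_mem x.2 _
    have hym : y ^ m = 1 := by
      rw [hy, ← pow_mul, Nat.ordProj_mul_ordCompl_eq_self]
      exact pow_orderOf_eq_one _
    have hyCD : ∀ d ∈ D, d * y = y * d := fun d hd =>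
      Subgroup.mem_centralizer_iff.mp hyX.2 d hd
    -- y centralizes pCore p G
    have hyC : y ∈ Subgroup.centralizer (pCore p G : Set G) := by
      rw [Subgroup.mem_centralizer_iff]
      intro g hg
      have hg' : g ∈ pCore p G := hg
      set c := y * g * y⁻¹ * g⁻¹ with hc
      have hcD : c ∈ D := by
        apply hKO
        rw [Subgroup.mem_inf]
        refine ⟨?_, ?_⟩
        · have h1 : g * y⁻¹ * g⁻¹ ∈ K := hK.conj_mem _ (inv_mem hyX.1) g
          have h2 : y * (g * y⁻¹ * g⁻¹) ∈ K := mul_mem hyX.1 h1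
          have h3 : y * g * y⁻¹ * g⁻¹ = y * (g * y⁻¹ * g⁻¹) := by group
          rw [hc, h3]; exact h2
        · have h1 : y * g * y⁻¹ ∈ pCore p G := (pCore_normal p).conj_mem g hg' y
          exact mul_mem h1 (inv_mem hg')
      have hyc : Commute c y := hyCD c hcD
      have key : ∀ j : ℕ, y ^ j * g * (y ^ j)⁻¹ = c ^ j * g := by
        intro j
        induction j with
        | zero => simp
        | succ j ih =>
          have hcj : Commute (c ^ j) y := hyc.pow_left j
          calc y ^ (j + 1) * g * (y ^ (j + 1))⁻¹
              = y * (y ^ j * g * (y ^ j)⁻¹) * y⁻¹ := by group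
            _ = y * (c ^ j * g) * y⁻¹ := by rw [ih]
            _ = c ^ j * (y * g * y⁻¹) := by
                have hyc' : y * c ^ j = c ^ j * y := hcj.symm.eq
                calc y * (c ^ j * g) * y⁻¹ = (y * c ^ j) * g * y⁻¹ := by group
                  _ = (c ^ j * y) * g * y⁻¹ := by rw [hyc']
                  _ = c ^ j * (y * g * y⁻¹) := by group
            _ = c ^ j * (c * g) := by rw [hc]; group
            _ = c ^ (j + 1) * g := by rw [pow_succ']; group
      have hcm : c ^ m = 1 := by
        have hkey := key m
        rw [hym] at hkey
        simp only [one_mul, inv_one, mul_one] at hkey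
        -- hkey : g = c ^ m * g
        have : c ^ m * g = 1 * g := by rw [one_mul, ← hkey]
        exact mul_right_cancel this
      have hc1 : c = 1 := eq_one_of_coprime_order p (Op'_isPGroup p K) hcD hcm hcop
      have hyg : y * g * y⁻¹ = g := by
        have := hc1
        rw [hc, mul_inv_eq_one] at this
        exact this
      calc g * y = (y * g * y⁻¹) * y := by rw [hyg]
        _ = y * g := by group
    have hyp : y ∈ pCore p G := h hyC
    have hy1 : y = 1 := eq_one_of_coprime_order p (pCore_isPGroup p) hyp hym hcop
    refine Subtype.ext ?_
    rw [hy] at hy1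
    exact_mod_cast hy1
  exact le_Op' p inf_le_left hXp hXnorm

end NormalInherits

section EquivTransport

variable (p : ℕ)

theorem pCore_map_le {G G' : Type*} [Group G] [Group G'] (e : G ≃* G') :
    (pCore p G).map e.toMonoidHom ≤ pCore p G' := by
  rw [Subgroup.map_le_iff_le_comap]
  refine pCore_le p fun N hN hp => ?_
  intro x hx
  rw [Subgroup.mem_comap]
  exact le_pCore p (hN.map e.toMonoidHom e.surjective) (hp.map e.toMonoidHom) ⟨x, hx, rfl⟩

theorem hasCharP_of_equiv {G G' : Type*} [Group G] [Group G'] (e : G ≃* G')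
    (h : Subgroup.centralizer (pCore p G : Set G) ≤ pCore p G) :
    Subgroup.centralizer (pCore p G' : Set G') ≤ pCore p G' := by
  intro z hz
  have h1 : e.symm z ∈ Subgroup.centralizer (pCore p G : Set G) := by
    rw [Subgroup.mem_centralizer_iff]
    intro g hg
    have hg' : e g ∈ pCore p G' := pCore_map_le p e ⟨g, hg, rfl⟩
    have h2 := Subgroup.mem_centralizer_iff.mp hz _ hg'
    have h3 := congrArg e.symm h2
    simpa using h3
  have h2 : e.symm z ∈ pCore p G := h h1
  have h3 : z = e (e.symm z) := (e.apply_symm_apply z).symm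
  rw [h3]
  exact pCore_map_le p e ⟨_, h2, rfl⟩

end EquivTransport

theorem stmt4' (p : ℕ) [Fact p.Prime] (G : Type*) [Group G] [Finite G]
    (P : Subgroup G) (hP : IsPGroup p P) :
    (Subgroup.centralizer (pCore p ↥(Subgroup.centralizer (P : Set G)) :
        Set ↥(Subgroup.centralizer (P : Set G))) ≤
      pCore p ↥(Subgroup.centralizer (P : Set G))) ↔
    (Subgroup.centralizer (pCore p ↥(Subgroup.normalizer (P : Set G)) : Set ↥(Subgroup.normalizer (P : Set G))) ≤
      pCore p ↥(Subgroup.normalizer (P : Set G))) := by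
  set C := Subgroup.centralizer (P : Set G) with hCdef
  set N := Subgroup.normalizer (P : Set G) with hNdef
  have hCN : C ≤ N := by
    intro c hc
    rw [hNdef, Subgroup.mem_normalizer_iff]
    intro x
    constructor
    · intro hx
      have hcom := Subgroup.mem_centralizer_iff.mp hc x hx
      have : c * x * c⁻¹ = x := by rw [← hcom]; group
      rw [this]; exact hx
    · intro hx
      have hcom := Subgroup.mem_centralizer_iff.mp hc _ hx
      have h1 : c * x = c * (c * x * c⁻¹) := by
        calc c * x = (c * x * c⁻¹) * c := by group
          _ = c * (c * x * c⁻¹) := hcom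
      have h2 : x = c * x * c⁻¹ := mul_left_cancel h1
      rw [← h2] at hx; exact hx
  have key : ∀ n ∈ N, ∀ x ∈ C, n * x * n⁻¹ ∈ C := by
    intro n hn x hx
    rw [hCdef, Subgroup.mem_centralizer_iff]
    intro q hq
    have hq' : n⁻¹ * q * n ∈ P := by
      have := (Subgroup.mem_normalizer_iff.mp (inv_mem hn) q).mp hq
      simpa [mul_assoc] using this
    have hcom := Subgroup.mem_centralizer_iff.mp hx _ hq'
    calc q * (n * x * n⁻¹) = n * ((n⁻¹ * q * n) * x) * n⁻¹ := by group
      _ = n * (x * (n⁻¹ * q * n)) * n⁻¹ := by rw [hcom]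
      _ = (n * x * n⁻¹) * q := by group
  have hNnormC : ∀ n ∈ N, n ∈ Subgroup.normalizer (C : Set G) := by
    intro n hn
    rw [Subgroup.mem_normalizer_iff]
    intro x
    constructor
    · exact fun hx => key n hn x hx
    · intro hx
      have h1 := key n⁻¹ (inv_mem hn) _ hx
      have h2 : n⁻¹ * (n * x * n⁻¹) * n⁻¹⁻¹ = x := by group
      rwa [h2] at h1
  constructor
  · intro hC
    rw [hasCharP_iff]
    intro x hx
    rw [Subgroup.mem_inf] at hx
    obtain ⟨hxN, hxCent⟩ := hx
    have hPle : P ≤ Op' p N := by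
      refine le_Op' p Subgroup.le_normalizer hP ?_
      intro k hk q hq
      exact (Subgroup.mem_normalizer_iff.mp hk q).mp hq
    have hxC : x ∈ C := by
      rw [hCdef, Subgroup.mem_centralizer_iff]
      intro q hq
      exact Subgroup.mem_centralizer_iff.mp hxCent q (hPle hq)
    have hEle : Op' p C ≤ Op' p N := by
      refine le_Op' p (le_trans (Op'_le p C) hCN) (Op'_isPGroup p C) ?_
      intro k hkN q hq
      exact Op'_normal_in p (hNnormC k hkN) q hq
    have hxE : x ∈ C ⊓ Subgroup.centralizer (Op' p C : Set G) := by
      rw [Subgroup.mem_inf]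
      refine ⟨hxC, Subgroup.mem_centralizer_iff.mpr fun q hq => ?_⟩
      exact Subgroup.mem_centralizer_iff.mp hxCent q (hEle hq)
    exact hEle ((hasCharP_iff p C).mp hC hxE)
  · intro hN'
    have hCnormal : (C.subgroupOf N).Normal := by
      constructor
      rintro ⟨c, hcN⟩ hc ⟨n, hnN⟩
      rw [Subgroup.mem_subgroupOf] at hc ⊢
      exact key n hnN c hc
    have hA := hasCharP_of_normal p hN' hCnormal
    exact hasCharP_of_equiv p (Subgroup.subgroupOfEquivOfLe hCN) hA

/-- `C_G(P)` has characteristic `p` if and only if `N_G(P)` has characteristic `p`. -/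
theorem stmt4 (p : ℕ) [Fact p.Prime] (G : Type*) [Group G] [Finite G]
    (P : Subgroup G) (hP : IsPGroup p P) :
    HasCharP p ↥(Subgroup.centralizer (P : Set G)) ↔ HasCharP p ↥(Subgroup.normalizer (P : Set G)) :=
  stmt4' p G P hP
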